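/- Let n ≥ 3 and 1 ≤ j < ⌊n/2⌋, and let A = G(n; ±{1, …, j}) be the circulant graph. For every l with 1 ≤ l ≤ n and every a, the set of l consecutive vertices {a, a+1, …, a+l−1} (taken modulo n) induces a maximum subgraph of A on l vertices; that is, for every subset S of V(A) with |S| = l, the number of edges of A with both endpoints in S is at most the number of edges of A with both endpoints in {a, a+1, …, a+l−1}. -/

import Mathlib

open scoped Classical

/-- Number of edges of `G` with both endpoints in `S`. -/
noncomputable def interiorCount {V : Type*} [Fintype V] (G : SimpleGraph V)
    (S : Finset V) : ℕ :=
  (G.edgeFinset.filter (fun e => ∀ v ∈ e, v ∈ S)).card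

/-- The circulant graph `G(n; ±{1, …, j})` on the vertex set `ZMod n`:
`u` and `v` are adjacent iff `u − v ≡ ±t (mod n)` for some `1 ≤ t ≤ j`. -/
def circulantGraph (n j : ℕ) : SimpleGraph (ZMod n) :=
  SimpleGraph.fromRel (fun u v => ∃ t : ℕ, 1 ≤ t ∧ t ≤ j ∧ u - v = (t : ZMod n))

namespace CirculantAux

open Finset

variable {n : ℕ}

/-- number of `u ∈ S` with `u + t ∈ S`. -/
noncomputable def cnt (S : Finset (ZMod n)) (t : ZMod n) : ℕ :=
  (S.filter (fun u => u + t ∈ S)).card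

/-- number of `u ∈ S` with `u + t ∉ S`. -/
noncomputable def bd (S : Finset (ZMod n)) (t : ZMod n) : ℕ :=
  (S.filter (fun u => u + t ∉ S)).card

lemma cnt_add_bd (S : Finset (ZMod n)) (t : ZMod n) : cnt S t + bd S t = S.card := by
  classical
  exact Finset.card_filter_add_card_filter_not _

lemma bd_zero (S : Finset (ZMod n)) : bd S 0 = 0 := by
  simp only [bd, add_zero]
  rw [Finset.filter_eq_empty_iff.mpr (fun u hu => by simp [hu])]
  simp

lemma cnt_neg (S : Finset (ZMod n)) (t : ZMod n) : cnt S (-t) = cnt S t := by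
  classical
  apply Finset.card_bij (fun u _ => u + -t)
  · intro u hu
    simp only [mem_filter] at hu ⊢
    refine ⟨hu.2, ?_⟩
    simpa using hu.1
  · intro a ha b hb h
    exact add_right_cancel h
  · intro b hb
    simp only [mem_filter] at hb
    refine ⟨b + t, ?_, by ring⟩
    simp only [mem_filter]
    exact ⟨hb.2, by simpa using hb.1⟩

lemma bd_eq (S : Finset (ZMod n)) (t : ZMod n) : bd S t = S.card - cnt S t := by
  have := cnt_add_bd S t; omega

lemma bd_neg (S : Finset (ZMod n)) (t : ZMod n) : bd S (-t) = bd S t := by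
  rw [bd_eq, bd_eq, cnt_neg]

lemma bd_subadd (S : Finset (ZMod n)) (s t : ZMod n) : bd S (s + t) ≤ bd S s + bd S t := by
  classical
  have hsplit : bd S (s+t) = ((S.filter (fun u => u + (s+t) ∉ S)).filter (fun u => u + s ∉ S)).card
      + ((S.filter (fun u => u + (s+t) ∉ S)).filter (fun u => ¬ (u + s ∉ S))).card := by
    rw [bd]
    exact (Finset.card_filter_add_card_filter_not _).symm
  rw [hsplit]
  gcongr
  · apply Finset.card_le_card
    intro u hu
    simp only [mem_filter] at hu ⊢
    exact ⟨hu.1.1, hu.2⟩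
  · apply Finset.card_le_card_of_injOn (fun u => u + s)
    · intro u hu
      simp only [Finset.mem_coe, mem_filter, not_not] at hu ⊢
      refine ⟨hu.2, ?_⟩
      rw [add_assoc]
      exact hu.1.2
    · intro a _ b _ h
      exact add_right_cancel h

lemma bd_le_card (S : Finset (ZMod n)) (t : ZMod n) : bd S t ≤ S.card :=
  Finset.card_le_card (filter_subset _ _)

lemma bd_le_compl [NeZero n] (S : Finset (ZMod n)) (t : ZMod n) : bd S t ≤ n - S.card := by
  classical
  have h : bd S t ≤ Sᶜ.card := by
    apply Finset.card_le_card_of_injOn (fun u => u + t)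
    · intro u hu
      simp only [bd, Finset.mem_coe, mem_filter] at hu
      simpa using hu.2
    · intro a _ b _ h; exact add_right_cancel h
  rwa [Finset.card_compl, Fintype.card_eq_nat_card, Nat.card_zmod] at h

lemma sum_cnt [NeZero n] (S : Finset (ZMod n)) :
    ∑ t : ZMod n, cnt S t = S.card * S.card := by
  classical
  have h1 : ∀ t : ZMod n, cnt S t = ∑ u ∈ S, if u + t ∈ S then 1 else 0 := fun t =>
    Finset.card_filter _ _
  simp only [h1]
  rw [Finset.sum_comm]
  have h2 : ∀ u : ZMod n, ∑ t : ZMod n, (if u + t ∈ S then 1 else 0) = S.card := by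
    intro u
    rw [← Finset.card_filter]
    apply Finset.card_bij (fun t _ => u + t)
    · intro t ht; simpa using ht
    · intro a _ b _ h; exact add_left_cancel h
    · intro b hb; exact ⟨b - u, by simpa using hb, by ring⟩
  rw [Finset.sum_congr rfl (fun u _ => h2 u), Finset.sum_const, smul_eq_mul]

lemma sum_zmod [NeZero n] (f : ZMod n → ℕ) :
    ∑ t : ZMod n, f t = ∑ k ∈ Finset.range n, f (k : ZMod n) := by
  apply Finset.sum_bij' (fun (t : ZMod n) _ => t.val) (fun (k : ℕ) _ => (k : ZMod n))
  · intro t _; simpa using ZMod.val_lt t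
  · intro k _; exact Finset.mem_univ _
  · intro t _; exact ZMod.natCast_rightInverse t
  · intro k hk; exact ZMod.val_cast_of_lt (Finset.mem_range.mp hk)
  · intro t _; rw [ZMod.natCast_rightInverse t]

lemma gauss_sum : ∀ K : ℕ, 2 * (∑ t ∈ Finset.range K, (t + 1)) = K * (K + 1) := by
  intro K
  have h : ∑ t ∈ Finset.range K, (t + 1) = ∑ i ∈ Finset.range (K + 1), i := by
    rw [Finset.sum_range_succ' (fun i => i) K]; simp
  calc 2 * (∑ t ∈ Finset.range K, (t + 1)) = (∑ i ∈ Finset.range (K + 1), i) * 2 := by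
        rw [h]; ring
    _ = (K + 1) * (K + 1 - 1) := Finset.sum_range_id_mul_two (K + 1)
    _ = K * (K + 1) := by rw [Nat.add_sub_cancel]; ring

lemma abstract_bound [NeZero n] (m : ℕ) (b : ZMod n → ℕ)
    (hzero : b 0 = 0) (hsym : ∀ t, b (-t) = b t)
    (hsub : ∀ s t, b (s + t) ≤ b s + b t)
    (hcap : ∀ t, b t ≤ m)
    (hsum : ∑ t : ZMod n, b t = m * (n - m)) (hm : 2 * m ≤ n) :
    ∀ jj, 2 * jj < n →
      ∑ t ∈ Finset.range jj, min (t + 1) m ≤ ∑ t ∈ Finset.range jj, b ((t + 1 : ℕ) : ZMod n) := by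
  have reflect : ∀ jj : ℕ, ∑ s ∈ Finset.range jj, b ((jj - s : ℕ) : ZMod n)
      = ∑ s ∈ Finset.range jj, b ((s + 1 : ℕ) : ZMod n) := by
    intro jj
    rw [← Finset.sum_range_reflect (fun i => b ((i + 1 : ℕ) : ZMod n)) jj]
    apply Finset.sum_congr rfl
    intro i hi
    congr 2
    have := Finset.mem_range.mp hi
    omega
  have base : ∀ jj, 2 * jj < n → m ≤ jj + 1 →
      ∑ t ∈ Finset.range jj, min (t + 1) m ≤ ∑ t ∈ Finset.range jj, b ((t + 1 : ℕ) : ZMod n) := by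
    intro jj hj hmj
    rcases Nat.eq_zero_or_pos m with hm0 | hm1
    · simp [hm0]
    set B := ∑ t ∈ Finset.range jj, b ((t + 1 : ℕ) : ZMod n) with hB
    have key : m * (n - m) ≤ B * 2 + (n - 2 * jj - 1) * m := by
      rw [← hsum, sum_zmod]
      have h1 : jj + 1 ≤ n - jj := by omega
      have h2 : n - jj ≤ n := by omega
      rw [Finset.range_eq_Ico, ← Finset.sum_Ico_consecutive _ (Nat.zero_le (jj+1)) (le_trans h1 h2),
        ← Finset.sum_Ico_consecutive _ h1 h2]
      have e1 : ∑ k ∈ Finset.Ico 0 (jj + 1), b ((k : ℕ) : ZMod n) = B := by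
        rw [← Finset.range_eq_Ico, Finset.sum_range_succ']
        simp [hzero, hB]
      have e3 : ∑ k ∈ Finset.Ico (n - jj) n, b ((k : ℕ) : ZMod n) = B := by
        rw [Finset.sum_Ico_eq_sum_range]
        have hn : n - (n - jj) = jj := by omega
        rw [hn, hB, ← reflect jj]
        apply Finset.sum_congr rfl
        intro i hi
        have hi' := Finset.mem_range.mp hi
        have hcast : ((n - jj + i : ℕ) : ZMod n) = -(((jj - i : ℕ) : ZMod n)) := by
          have h5 : (n - jj + i) + (jj - i) = n := by omega
          have h6 : ((n - jj + i : ℕ) : ZMod n) + ((jj - i : ℕ) : ZMod n) = ((n : ℕ) : ZMod n) := by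
            rw [← Nat.cast_add, h5]
          rw [ZMod.natCast_self] at h6
          linear_combination h6
        rw [hcast, hsym]
      have e2 : ∑ k ∈ Finset.Ico (jj + 1) (n - jj), b ((k : ℕ) : ZMod n)
          ≤ (n - 2 * jj - 1) * m := by
        have h7 := Finset.sum_le_card_nsmul (Finset.Ico (jj + 1) (n - jj))
          (fun k => b ((k : ℕ) : ZMod n)) m (fun k _ => hcap _)
        rwa [Nat.card_Ico, smul_eq_mul, show n - jj - (jj + 1) = n - 2 * jj - 1 by omega] at h7
      rw [e1, e3]
      linarith [e2]
    have hT : 2 * (∑ t ∈ Finset.range jj, min (t + 1) m) = m * (2 * jj + 1 - m) := by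
      have hsplit : Finset.range jj = Finset.Ico 0 (m - 1) ∪ Finset.Ico (m - 1) jj := by
        rw [Finset.Ico_union_Ico_eq_Ico (Nat.zero_le _) (by omega), Finset.range_eq_Ico]
      rw [hsplit, Finset.sum_union (Finset.disjoint_left.mpr (fun x hx hy => by
        simp only [Finset.mem_Ico, Finset.mem_range] at hx hy; omega))]
      have p1 : ∑ t ∈ Finset.Ico 0 (m - 1), min (t + 1) m = ∑ t ∈ Finset.range (m - 1), (t + 1) := by
        rw [← Finset.range_eq_Ico]
        exact Finset.sum_congr rfl (fun t ht => by
          have := Finset.mem_range.mp ht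
          show min (t + 1) m = t + 1
          omega)
      have p2 : ∑ t ∈ Finset.Ico (m - 1) jj, min (t + 1) m = (jj - (m - 1)) * m := by
        rw [Finset.sum_congr rfl (fun t ht => by
          have := (Finset.mem_Ico.mp ht).1
          show min (t + 1) m = m
          omega), Finset.sum_const, Nat.card_Ico, smul_eq_mul]
      rw [p1, p2, mul_add]
      have g : 2 * ∑ t ∈ Finset.range (m - 1), (t + 1) = (m - 1) * m := by
        have h9 := gauss_sum (m - 1)
        rwa [show m - 1 + 1 = m by omega] at h9
      rw [g]
      have hlin : (m - 1) + 2 * (jj - (m - 1)) = 2 * jj + 1 - m := by omega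
      calc (m-1) * m + 2 * ((jj - (m-1)) * m) = ((m - 1) + 2 * (jj - (m - 1))) * m := by ring
        _ = (2 * jj + 1 - m) * m := by rw [hlin]
        _ = m * (2 * jj + 1 - m) := mul_comm _ _
    have hCD : n - m = (2 * jj + 1 - m) + (n - 2 * jj - 1) := by omega
    rw [hCD, Nat.mul_add] at key
    have hfin : m * (2 * jj + 1 - m) ≤ B * 2 := by linarith [key]
    omega
  suffices H : ∀ k jj, m - jj ≤ k → 2 * jj < n →
      ∑ t ∈ Finset.range jj, min (t + 1) m ≤ ∑ t ∈ Finset.range jj, b ((t + 1 : ℕ) : ZMod n) by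
    exact fun jj h => H m jj (Nat.sub_le _ _) h
  intro k
  induction k with
  | zero => exact fun jj hk hj => base jj hj (by omega)
  | succ k ih =>
    intro jj hk hj
    by_cases hcase : m ≤ jj + 1
    · exact base jj hj hcase
    · push_neg at hcase
      rcases Nat.eq_zero_or_pos jj with hjj0 | hjj1
      · simp [hjj0]
      set B := ∑ t ∈ Finset.range jj, b ((t + 1 : ℕ) : ZMod n) with hBdef
      set bb := b ((jj + 1 : ℕ) : ZMod n) with hbb
      have hIH := ih (jj + 1) (by omega) (by omega)
      have hB' : ∑ t ∈ Finset.range (jj + 1), b ((t + 1 : ℕ) : ZMod n) = B + bb := by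
        rw [Finset.sum_range_succ]
      have hstep : jj * bb ≤ 2 * B := by
        have hterm : ∀ s ∈ Finset.range jj,
            bb ≤ b ((s + 1 : ℕ) : ZMod n) + b ((jj - s : ℕ) : ZMod n) := by
          intro s hs
          have hs' := Finset.mem_range.mp hs
          have hc : ((jj + 1 : ℕ) : ZMod n) = ((s + 1 : ℕ) : ZMod n) + ((jj - s : ℕ) : ZMod n) := by
            rw [← Nat.cast_add]
            congr 1
            omega
          rw [hbb, hc]
          exact hsub _ _
        have h8 := Finset.card_nsmul_le_sum (Finset.range jj)
          (fun s => b ((s + 1 : ℕ) : ZMod n) + b ((jj - s : ℕ) : ZMod n)) bb hterm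
        rw [Finset.card_range, smul_eq_mul, Finset.sum_add_distrib, reflect jj] at h8
        omega
      have hT : 2 * (∑ t ∈ Finset.range jj, min (t + 1) m) = jj * (jj + 1) := by
        rw [Finset.sum_congr rfl (fun t ht => by
          have := Finset.mem_range.mp ht
          show min (t + 1) m = t + 1
          omega)]
        exact gauss_sum jj
      have hT' : 2 * (∑ t ∈ Finset.range (jj + 1), min (t + 1) m) = (jj + 1) * (jj + 2) := by
        rw [Finset.sum_congr rfl (fun t ht => by
          have := Finset.mem_range.mp ht
          show min (t + 1) m = t + 1
          omega)]
        rw [gauss_sum (jj + 1)]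
      set T := ∑ t ∈ Finset.range jj, min (t + 1) m with hTdef
      set T' := ∑ t ∈ Finset.range (jj + 1), min (t + 1) m with hT'def
      have h4 : (jj + 2) * (2 * T) = jj * (2 * T') := by
        rw [hT, hT']; ring
      have h5 : jj * (2 * T') ≤ (jj + 2) * (2 * B) := by
        calc jj * (2 * T') ≤ jj * (2 * (B + bb)) := by
              apply Nat.mul_le_mul_left
              rw [← hB']
              omega
          _ = jj * (2 * B) + 2 * (jj * bb) := by ring
          _ ≤ jj * (2 * B) + 2 * (2 * B) := Nat.add_le_add_left (Nat.mul_le_mul_left 2 hstep) _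
          _ = (jj + 2) * (2 * B) := by ring
      have h6 : (jj + 2) * (2 * T) ≤ (jj + 2) * (2 * B) := h4 ▸ h5
      have h7 : 2 * T ≤ 2 * B := Nat.le_of_mul_le_mul_left h6 (by omega)
      omega

lemma natCast_ne_zero_zmod [NeZero n] {k : ℕ} (h1 : 0 < k) (h2 : k < n) :
    (k : ZMod n) ≠ 0 := by
  intro h
  have hd := (ZMod.natCast_eq_zero_iff k n).mp h
  have := Nat.le_of_dvd h1 hd
  omega

lemma interiorCount_eq [NeZero n] (j : ℕ) (hj : 2 * j < n) (S : Finset (ZMod n)) :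
    interiorCount (circulantGraph n j) S = ∑ t ∈ Finset.range j, cnt S ((t + 1 : ℕ) : ZMod n) := by
  classical
  simp only [cnt]
  rw [← Finset.card_sigma]
  symm
  apply Finset.card_bij
    (fun (p : (_ : ℕ) × ZMod n) _ => s(p.2, p.2 + ((p.1 + 1 : ℕ) : ZMod n)))
  · rintro ⟨t, u⟩ hp
    simp only [Finset.mem_sigma, Finset.mem_range, Finset.mem_filter] at hp
    obtain ⟨ht, hu, hut⟩ := hp
    simp only [interiorCount, Finset.mem_filter, SimpleGraph.mem_edgeFinset,
      SimpleGraph.mem_edgeSet]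
    refine ⟨?_, ?_⟩
    · show (circulantGraph n j).Adj u (u + ((t + 1 : ℕ) : ZMod n))
      unfold circulantGraph
      rw [SimpleGraph.fromRel_adj]
      constructor
      · intro h
        have h0 : ((t + 1 : ℕ) : ZMod n) = 0 := by
          have h9 := congrArg (fun x => x - u) h
          simpa using h9.symm
        exact natCast_ne_zero_zmod (by omega) (by omega) h0
      · right
        exact ⟨t + 1, by omega, by omega, by ring⟩
    · intro v hv
      rw [Sym2.mem_iff] at hv
      rcases hv with rfl | rfl
      · exact hu
      · exact hut
  · rintro ⟨t, u⟩ hp ⟨t', u'⟩ hp' h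
    simp only [Finset.mem_sigma, Finset.mem_range] at hp hp'
    rw [Sym2.eq_iff] at h
    rcases h with ⟨h1, h2⟩ | ⟨h1, h2⟩
    · subst h1
      have hc : ((t + 1 : ℕ) : ZMod n) = ((t' + 1 : ℕ) : ZMod n) := add_left_cancel h2
      have hv := congrArg ZMod.val hc
      rw [ZMod.val_cast_of_lt (by omega), ZMod.val_cast_of_lt (by omega)] at hv
      have ht : t = t' := by omega
      subst ht
      rfl
    · exfalso
      have hc : ((t + 1 : ℕ) : ZMod n) + ((t' + 1 : ℕ) : ZMod n) = 0 := by
        linear_combination h2 - h1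
      have hc2 : ((t + t' + 2 : ℕ) : ZMod n) = 0 := by
        push_cast at hc ⊢
        linear_combination hc
      exact natCast_ne_zero_zmod (k := t + t' + 2) (by omega) (by omega) hc2
  · intro e he
    induction e using Sym2.ind with
    | _ u v =>
      simp only [interiorCount, Finset.mem_filter, SimpleGraph.mem_edgeFinset,
        SimpleGraph.mem_edgeSet] at he
      obtain ⟨hadj, hmem⟩ := he
      have hadj' : (circulantGraph n j).Adj u v := hadj
      unfold circulantGraph at hadj'
      rw [SimpleGraph.fromRel_adj] at hadj'
      obtain ⟨hne, hrel⟩ := hadj'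
      have hu : u ∈ S := hmem u (Sym2.mem_mk_left u v)
      have hv : v ∈ S := hmem v (Sym2.mem_mk_right u v)
      rcases hrel with ⟨t', h1, h2, h3⟩ | ⟨t', h1, h2, h3⟩
      · have hvu : v + ((t' : ℕ) : ZMod n) = u := by rw [← h3]; ring
        refine ⟨⟨t' - 1, v⟩, ?_, ?_⟩
        · simp only [Finset.mem_sigma, Finset.mem_range, Finset.mem_filter]
          refine ⟨by omega, hv, ?_⟩
          rw [show t' - 1 + 1 = t' by omega, hvu]
          exact hu
        · show s(v, v + ((t' - 1 + 1 : ℕ) : ZMod n)) = s(u, v)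
          rw [show t' - 1 + 1 = t' by omega, hvu, Sym2.eq_swap]
      · have huv : u + ((t' : ℕ) : ZMod n) = v := by rw [← h3]; ring
        refine ⟨⟨t' - 1, u⟩, ?_, ?_⟩
        · simp only [Finset.mem_sigma, Finset.mem_range, Finset.mem_filter]
          refine ⟨by omega, hu, ?_⟩
          rw [show t' - 1 + 1 = t' by omega, huv]
          exact hv
        · show s(u, u + ((t' - 1 + 1 : ℕ) : ZMod n)) = s(u, v)
          rw [show t' - 1 + 1 = t' by omega, huv]

lemma bd_interval [NeZero n] (a : ZMod n) (l t : ℕ) :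
    bd ((Finset.range l).image (fun i : ℕ => a + (i : ZMod n))) ((t : ℕ) : ZMod n) ≤ t := by
  classical
  set I := (Finset.range l).image (fun i : ℕ => a + (i : ZMod n)) with hI
  have hsub : I.filter (fun u => u + ((t : ℕ) : ZMod n) ∉ I)
      ⊆ ((Finset.range l).filter (fun i => l ≤ i + t)).image (fun i : ℕ => a + (i : ZMod n)) := by
    intro u hu
    simp only [mem_filter, hI, mem_image, mem_range] at hu ⊢
    obtain ⟨⟨i, hi, rfl⟩, hnot⟩ := hu
    refine ⟨i, ⟨hi, ?_⟩, rfl⟩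
    by_contra hlt
    push_neg at hlt
    apply hnot
    refine ⟨i + t, hlt, by push_cast; ring⟩
  calc bd I ((t : ℕ) : ZMod n) ≤ (((Finset.range l).filter (fun i => l ≤ i + t)).image
        (fun i : ℕ => a + (i : ZMod n))).card := Finset.card_le_card hsub
    _ ≤ ((Finset.range l).filter (fun i => l ≤ i + t)).card := Finset.card_image_le
    _ ≤ (Finset.Ico (l - t) l).card := Finset.card_le_card (by
        intro i hi
        simp only [mem_filter, mem_range, Finset.mem_Ico] at hi ⊢
        omega)
    _ ≤ t := by rw [Nat.card_Ico]; omega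

lemma image_coe_eq [NeZero n] (l : ℕ) (a : ZMod n) :
    ((Finset.range l).image (fun t => a + (t : ZMod n)))
      = ((Finset.range l).image (fun t : ℕ => a + ((t : ℕ) : ZMod n))) := by
  ext x
  simp only [Finset.mem_image]
  have hmem : ∀ y : ZMod n, (y ∈ (do
      let a ← Finset.range l
      pure ((a : ℕ) : ZMod n) : Finset (ZMod n))) ↔ ∃ i ∈ Finset.range l, ((i : ℕ) : ZMod n) = y := by
    intro y
    simp only [Finset.bind_def, Finset.mem_sup]
    simp [eq_comm]
  constructor
  · rintro ⟨y, hy, rfl⟩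
    obtain ⟨i, hi, rfl⟩ := (hmem y).mp hy
    exact ⟨i, hi, rfl⟩
  · rintro ⟨i, hi, rfl⟩
    exact ⟨(i : ZMod n), (hmem _).mpr ⟨i, hi, rfl⟩, rfl⟩

end CirculantAux

/-- In the circulant graph `G(n; ±{1,…,j})` with `n ≥ 3` and
`1 ≤ j < ⌊n/2⌋`, any set of `l` consecutive vertices
`{a, a+1, …, a+l−1}` (mod `n`) induces a maximum subgraph on `l` vertices. -/
theorem circulant_consecutive_maximum (n j : ℕ) [NeZero n] (hn : 3 ≤ n)
    (hj₁ : 1 ≤ j) (hj₂ : j < n / 2)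
    (l : ℕ) (hl₁ : 1 ≤ l) (hl₂ : l ≤ n) (a : ZMod n)
    (S : Finset (ZMod n)) (hS : S.card = l) :
    interiorCount (circulantGraph n j) S ≤
      interiorCount (circulantGraph n j)
        ((Finset.range l).image (fun t => a + (t : ZMod n))) := by
  classical
  open CirculantAux Finset in
  rw [CirculantAux.image_coe_eq l a]
  set I := (Finset.range l).image (fun t : ℕ => a + ((t : ℕ) : ZMod n)) with hI
  have hj2n : 2 * j < n := by omega
  have hIcard : I.card = l := by
    rw [hI, Finset.card_image_of_injOn, Finset.card_range]
    intro x hx y hy hxy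
    simp only [Finset.coe_range, Set.mem_Iio] at hx hy
    have h1 : ((x : ℕ) : ZMod n) = ((y : ℕ) : ZMod n) := add_left_cancel hxy
    have h2 := congrArg ZMod.val h1
    rwa [ZMod.val_cast_of_lt (lt_of_lt_of_le hx hl₂),
      ZMod.val_cast_of_lt (lt_of_lt_of_le hy hl₂)] at h2
  set m := min l (n - l) with hm
  have hmn : 2 * m ≤ n := by omega
  have hsumbd : ∀ T : Finset (ZMod n), T.card = l → ∑ t : ZMod n, bd T t = m * (n - m) := by
    intro T hT
    have h1 : ∑ t : ZMod n, (cnt T t + bd T t) = n * l := by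
      rw [Finset.sum_congr rfl (fun t _ => cnt_add_bd T t), Finset.sum_const, smul_eq_mul, hT]
      congr 1
      rw [Finset.card_univ, Fintype.card_eq_nat_card, Nat.card_zmod]
    rw [Finset.sum_add_distrib, sum_cnt, hT] at h1
    have h2 : ∑ t : ZMod n, bd T t = n * l - l * l := by omega
    rw [h2]
    rcases Nat.le_total l (n - l) with h | h
    · rw [hm, min_eq_left h]
      have : l * (n - l) = l * n - l * l := Nat.mul_sub l n l
      rw [this, Nat.mul_comm l n]
    · rw [hm, min_eq_right h, show n - (n - l) = l by omega]
      have : (n - l) * l = n * l - l * l := Nat.sub_mul n l l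
      rw [this]
  -- bound for arbitrary S
  have hcapS : ∀ T : Finset (ZMod n), T.card = l → ∀ t : ZMod n, bd T t ≤ m := by
    intro T hT t
    refine le_min ?_ ?_
    · rw [← hT]; exact bd_le_card T t
    · rw [← hT]; exact bd_le_compl T t
  have habs : ∑ t ∈ Finset.range j, min (t + 1) m
      ≤ ∑ t ∈ Finset.range j, bd S ((t + 1 : ℕ) : ZMod n) :=
    abstract_bound m (bd S) (bd_zero S) (bd_neg S) (bd_subadd S)
      (hcapS S hS) (hsumbd S hS) hmn j hj2n
  -- bound for the interval
  have hIbd : ∑ t ∈ Finset.range j, bd I ((t + 1 : ℕ) : ZMod n)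
      ≤ ∑ t ∈ Finset.range j, min (t + 1) m := by
    apply Finset.sum_le_sum
    intro t _
    refine le_min ?_ (hcapS I hIcard _)
    exact bd_interval a l (t + 1)
  -- put it together
  have hS1 : ∑ t ∈ Finset.range j, cnt S ((t + 1 : ℕ) : ZMod n)
      + ∑ t ∈ Finset.range j, bd S ((t + 1 : ℕ) : ZMod n) = j * l := by
    rw [← Finset.sum_add_distrib,
      Finset.sum_congr rfl (fun t _ => cnt_add_bd S _),
      Finset.sum_const, Finset.card_range, smul_eq_mul, hS]
  have hI1 : ∑ t ∈ Finset.range j, cnt I ((t + 1 : ℕ) : ZMod n)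
      + ∑ t ∈ Finset.range j, bd I ((t + 1 : ℕ) : ZMod n) = j * l := by
    rw [← Finset.sum_add_distrib,
      Finset.sum_congr rfl (fun t _ => cnt_add_bd I _),
      Finset.sum_const, Finset.card_range, smul_eq_mul, hIcard]
  rw [interiorCount_eq j hj2n S, interiorCount_eq j hj2n I]
  linarith [habs, hIbd, hS1, hI1]
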